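/- arXiv:1607.08287 — 2 statements merged into one kernel-verified Lean document; each statement's English description precedes it below -/
import Mathlib

section
/- Let $K = 2$, $\rho_1, \rho_2 > 0$ with $\rho_1 + \rho_2 = 1$, $\alpha_1, \alpha_2, \sigma_1, \sigma_2 > 0$. Define $M_{ij} = -\alpha_i(\delta_{ij} - \rho_j)$, $R = \mathrm{diag}(\rho_1 \sigma_1^{-2}, \rho_2 \sigma_2^{-2})$, $\varrho = (\rho_1, \rho_2)^T$, $\gamma = \alpha_2\rho_1 + \alpha_1\rho_2$. Then for all $s \ge 0$: $\varrho^T e^{Ms} R^{-1} (e^{Ms})^T \varrho = \frac{\sigma_1^2 \rho_1}{\gamma^2}\big(\alpha_2 + \rho_2(\alpha_1 - \alpha_2)e^{-\gamma s}\big)^2 + \frac{\sigma_2^2 \rho_2}{\gamma^2}\big(\alpha_1 + \rho_1(\alpha_2 - \alpha_1)e^{-\gamma s}\big)^2$. -/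
open scoped Matrix

set_option maxHeartbeats 1000000 in
/-- explicit formula for the quadratic form
`ϱᵀ e^{Ms} R⁻¹ (e^{Ms})ᵀ ϱ` in the two-group (`K = 2`) case. -/
theorem statement12 (ρ α σ : Fin 2 → ℝ)
    (hρ : ∀ k, 0 < ρ k) (hρsum : ρ 0 + ρ 1 = 1)
    (hα : ∀ k, 0 < α k) (hσ : ∀ k, 0 < σ k) (s : ℝ) (hs : 0 ≤ s) :
    let M : Matrix (Fin 2) (Fin 2) ℝ :=
      Matrix.of fun i j => -(α i) * ((if i = j then (1:ℝ) else 0) - ρ j)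
    let Rinv : Matrix (Fin 2) (Fin 2) ℝ := Matrix.diagonal fun i => σ i ^ 2 / ρ i
    let γ : ℝ := α 1 * ρ 0 + α 0 * ρ 1
    let E : Matrix (Fin 2) (Fin 2) ℝ := NormedSpace.exp (s • M)
    ρ ⬝ᵥ ((E * Rinv * Eᵀ) *ᵥ ρ) =
      σ 0 ^ 2 * ρ 0 / γ ^ 2 * (α 1 + ρ 1 * (α 0 - α 1) * Real.exp (-γ * s)) ^ 2 +
        σ 1 ^ 2 * ρ 1 / γ ^ 2 * (α 0 + ρ 0 * (α 1 - α 0) * Real.exp (-γ * s)) ^ 2 := by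
  intro M Rinv γ E
  set a : ℝ := α 0 * ρ 1 with ha
  set b : ℝ := α 1 * ρ 0 with hb
  have ha0 : 0 < a := mul_pos (hα 0) (hρ 1)
  have hb0 : 0 < b := mul_pos (hα 1) (hρ 0)
  have hγ : γ = b + a := rfl
  have hγ0 : 0 < γ := by rw [hγ]; positivity
  set U : Matrix (Fin 2) (Fin 2) ℝ := !![1, a; 1, -b] with hU
  have hdet : U.det = -γ := by
    rw [hU, Matrix.det_fin_two_of, hγ]; ring
  have hUdet : IsUnit U.det := by rw [hdet]; exact (isUnit_iff_ne_zero).2 (by linarith)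
  have hUunit : IsUnit U := (Matrix.isUnit_iff_isUnit_det U).2 hUdet
  set D : Matrix (Fin 2) (Fin 2) ℝ := Matrix.diagonal ![0, -γ * s] with hD
  have h1 : ρ 1 = 1 - ρ 0 := by linarith
  have hMU : (s • M) * U = U * D := by
    ext i j
    fin_cases i <;> fin_cases j <;>
      simp [hU, hD, ha, hb, M, Matrix.mul_apply, Fin.sum_univ_two, Matrix.diagonal,
        Matrix.smul_apply]
    · linear_combination (s * α 0) * hρsum
    · linear_combination (s * α 0 ^ 2 * ρ 1) * hρsum
    · linear_combination (s * α 1) * hρsum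
    · linear_combination (-(s * α 1 ^ 2 * ρ 0)) * hρsum
  have hconj : s • M = U * D * U⁻¹ := by
    have h := congrArg (fun X => X * U⁻¹) hMU
    simpa [mul_assoc, Matrix.mul_nonsing_inv U hUdet] using h
  have hexpD : NormedSpace.exp D = !![1, 0; 0, Real.exp (-γ * s)] := by
    rw [hD, Matrix.exp_diagonal]
    ext i j
    fin_cases i <;> fin_cases j <;>
      simp [Matrix.diagonal_apply, Pi.coe_exp, ← Real.exp_eq_exp_ℝ, neg_mul]
  have hE : E = U * !![1, 0; 0, Real.exp (-γ * s)] * U⁻¹ := by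
    show NormedSpace.exp (s • M) = _
    rw [hconj, Matrix.exp_conj U D hUunit, hexpD]
  -- explicit inverse of U
  have hUinv : U⁻¹ = (γ)⁻¹ • !![b, a; 1, -1] := by
    rw [Matrix.inv_def, hdet, hU, Matrix.adjugate_fin_two_of]
    ext i j
    fin_cases i <;> fin_cases j <;>
      simp [Ring.inverse_eq_inv'] <;> field_simp <;> ring
  set e : ℝ := Real.exp (-γ * s) with he
  have hEval : E = (γ)⁻¹ • !![b + a * e, a - a * e; b - b * e, a + b * e] := by
    rw [hE, hUinv]
    ext i j
    fin_cases i <;> fin_cases j <;>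
      simp [hU, Matrix.mul_apply, Fin.sum_univ_two, Matrix.diagonal] <;> ring
  have hρ0 := (hρ 0).ne'
  have hρ1 := (hρ 1).ne'
  have hγne : γ ≠ 0 := hγ0.ne'
  clear hMU hconj hexpD hE
  rw [hEval]
  simp only [dotProduct, Matrix.mulVec, Matrix.mul_apply, Fin.sum_univ_two,
    Matrix.smul_apply, Matrix.transpose_apply, Rinv, Matrix.diagonal, Matrix.of_apply,
    Matrix.cons_val', Matrix.cons_val_zero, Matrix.cons_val_one, Matrix.head_cons,
    Matrix.empty_val', Matrix.cons_val_fin_one, Matrix.head_fin_const, smul_eq_mul]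
  field_simp
  simp only [if_true, if_false, show (1:Fin 2) = 0 ↔ False by decide, show (0:Fin 2) = 1 ↔ False by decide]
  field_simp
  rw [ha, hb, h1]
  ring
end

section
/- Let $K = 2$, $\rho_1 + \rho_2 = 1$ with $\rho_1, \rho_2 > 0$, $\alpha_1, \alpha_2, \sigma_1, \sigma_2 > 0$, $\gamma = \alpha_2\rho_1 + \alpha_1\rho_2$, and $V_T^2 = \int_0^T \varrho^T e^{Ms} R^{-1}(e^{Ms})^T \varrho\, ds$ where $M_{ij} = -\alpha_i(\delta_{ij} - \rho_j)$ and $R = \mathrm{diag}(\rho_i \sigma_i^{-2})$. Then $V_T^2 = \frac{\sigma_1^2\rho_1}{\gamma^2}\big[\alpha_2^2 T + \frac{\rho_2^2(\alpha_1-\alpha_2)^2}{2\gamma}(1 - e^{-2\gamma T}) + \frac{2\alpha_2\rho_2(\alpha_1-\alpha_2)}{\gamma}(1 - e^{-\gamma T})\big] + \frac{\sigma_2^2\rho_2}{\gamma^2}\big[\alpha_1^2 T + \frac{\rho_1^2(\alpha_1-\alpha_2)^2}{2\gamma}(1 - e^{-2\gamma T}) + \frac{2\alpha_1\rho_1(\alpha_2-\alpha_1)}{\gamma}(1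 - e^{-\gamma T})\big]$. -/
open scoped Matrix

theorem tsum_aux {c : ℝ} (hc : c ≠ 0) :
    ∑' n : ℕ, (((n+1).factorial : ℝ))⁻¹ * c ^ n = (Real.exp c - 1) / c := by
  have h2 : Summable (fun n : ℕ => c ^ (n+1) / (n+1).factorial) :=
    (summable_nat_add_iff 1).mpr (Real.summable_pow_div_factorial c)
  have h1 : Summable (fun n : ℕ => (((n+1).factorial : ℝ))⁻¹ * c ^ n) := by
    have := h2.mul_left c⁻¹
    refine this.congr fun n => ?_
    field_simp [pow_succ]
    ring
  have hexp : Real.exp c = 1 + c * ∑' n : ℕ, (((n+1).factorial : ℝ))⁻¹ * c ^ n := by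
    have h0 : Real.exp c = ∑' n : ℕ, c ^ n / n.factorial := by
      rw [Real.exp_eq_exp_ℝ, NormedSpace.exp_eq_tsum_div]
    rw [h0, Summable.tsum_eq_zero_add (Real.summable_pow_div_factorial c)]
    simp only [pow_zero, Nat.factorial_zero, Nat.cast_one, div_one]
    congr 1
    rw [← tsum_mul_left]
    refine tsum_congr fun n => ?_
    field_simp [pow_succ]
    ring
  rw [eq_div_iff hc]
  linarith [hexp]

theorem exp_sq_eq {A : Matrix (Fin 2) (Fin 2) ℝ} {c : ℝ} (hc : c ≠ 0) (h : A * A = c • A) :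
    NormedSpace.exp A = 1 + ((Real.exp c - 1) / c) • A := by
  letI : SeminormedRing (Matrix (Fin 2) (Fin 2) ℝ) := Matrix.linftyOpSemiNormedRing
  letI : NormedRing (Matrix (Fin 2) (Fin 2) ℝ) := Matrix.linftyOpNormedRing
  letI : NormedAlgebra ℝ (Matrix (Fin 2) (Fin 2) ℝ) := Matrix.linftyOpNormedAlgebra
  have hpow : ∀ n : ℕ, A ^ (n+1) = c ^ n • A := by
    intro n
    induction n with
    | zero => simp
    | succ n ih =>
        rw [pow_succ, ih, smul_mul_assoc, h, smul_smul, pow_succ]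
  have h1 : Summable (fun n : ℕ => (((n+1).factorial : ℝ))⁻¹ * c ^ n) := by
    have := ((summable_nat_add_iff 1).mpr (Real.summable_pow_div_factorial c)).mul_left c⁻¹
    refine this.congr fun n => ?_
    field_simp [pow_succ]
    ring
  simp only [NormedSpace.exp_eq_tsum (𝕂 := ℝ)]
  erw [Summable.tsum_eq_zero_add (NormedSpace.expSeries_summable' (𝕂 := ℝ) A)]
  congr 1
  · simp
  calc (∑' n : ℕ, (((n+1).factorial : ℝ))⁻¹ • A ^ (n+1))
      = ∑' n : ℕ, ((((n+1).factorial : ℝ))⁻¹ * c ^ n) • A := by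
        refine tsum_congr fun n => ?_
        rw [hpow, smul_smul]
    _ = (∑' n : ℕ, (((n+1).factorial : ℝ))⁻¹ * c ^ n) • A := Summable.tsum_smul_const h1 A
    _ = ((Real.exp c - 1) / c) • A := by rw [tsum_aux hc]

theorem exp_int_aux (c T : ℝ) (hc : c ≠ 0) :
    ∫ s in (0:ℝ)..T, Real.exp (c * s) = (Real.exp (c * T) - 1) / c := by
  rw [intervalIntegral.integral_comp_mul_left (fun x => Real.exp x) hc]
  simp [integral_exp, smul_eq_mul]
  field_simp

set_option maxHeartbeats 1000000 in
theorem key (ρ α σ : Fin 2 → ℝ)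
    (hρ : ∀ k, 0 < ρ k) (hρsum : ρ 0 + ρ 1 = 1)
    (hα : ∀ k, 0 < α k) (hσ : ∀ k, 0 < σ k) (T : ℝ) (hT : 0 < T)
    (M : Matrix (Fin 2) (Fin 2) ℝ)
    (hM : M = Matrix.of fun i j => -(α i) * ((if i = j then (1:ℝ) else 0) - ρ j)) :
    (∫ s in (0:ℝ)..T,
        ρ ⬝ᵥ (((NormedSpace.exp (s • M)) * (Matrix.diagonal fun i => σ i ^ 2 / ρ i)
          * (NormedSpace.exp (s • M))ᵀ) *ᵥ ρ)) =
      σ 0 ^ 2 * ρ 0 / (α 1 * ρ 0 + α 0 * ρ 1) ^ 2 *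
          (α 1 ^ 2 * T + ρ 1 ^ 2 * (α 0 - α 1) ^ 2 / (2 * (α 1 * ρ 0 + α 0 * ρ 1)) *
              (1 - Real.exp (-2 * (α 1 * ρ 0 + α 0 * ρ 1) * T)) +
            2 * α 1 * ρ 1 * (α 0 - α 1) / (α 1 * ρ 0 + α 0 * ρ 1) *
              (1 - Real.exp (-(α 1 * ρ 0 + α 0 * ρ 1) * T))) +
        σ 1 ^ 2 * ρ 1 / (α 1 * ρ 0 + α 0 * ρ 1) ^ 2 *
          (α 0 ^ 2 * T + ρ 0 ^ 2 * (α 0 - α 1) ^ 2 / (2 * (α 1 * ρ 0 + α 0 * ρ 1)) *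
              (1 - Real.exp (-2 * (α 1 * ρ 0 + α 0 * ρ 1) * T)) +
            2 * α 0 * ρ 0 * (α 1 - α 0) / (α 1 * ρ 0 + α 0 * ρ 1) *
              (1 - Real.exp (-(α 1 * ρ 0 + α 0 * ρ 1) * T))) := by
  set γ : ℝ := α 1 * ρ 0 + α 0 * ρ 1 with hγdef
  have hγ : 0 < γ := add_pos (mul_pos (hα 1) (hρ 0)) (mul_pos (hα 0) (hρ 1))
  have hγ0 : γ ≠ 0 := ne_of_gt hγ
  have h1 : ρ 1 = 1 - ρ 0 := by linarith
  have hρ0 : ρ 0 ≠ 0 := ne_of_gt (hρ 0)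
  have hρ1 : (1:ℝ) - ρ 0 ≠ 0 := by have := hρ 1; rw [h1] at this; linarith
  have hM2 : M * M = (-γ) • M := by
    subst hM
    ext i j
    fin_cases i <;> fin_cases j <;>
      · simp [Matrix.mul_apply, Fin.sum_univ_two, Matrix.smul_apply, smul_eq_mul]
        rw [hγdef, h1]
        ring
  have hexp : ∀ s : ℝ,
      NormedSpace.exp (s • M) = 1 + ((1 - Real.exp (-(γ * s))) / γ) • M := by
    intro s
    rcases eq_or_ne s 0 with rfl | hs
    · simp
    · have hc : -(γ * s) ≠ 0 := by
        simp only [neg_ne_zero]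
        exact mul_ne_zero hγ0 hs
      have hA : (s • M) * (s • M) = (-(γ * s)) • (s • M) := by
        rw [smul_mul_assoc, mul_smul_comm, hM2, smul_smul, smul_smul, smul_smul]
        congr 1
        ring
      have hsc : (Real.exp (-(γ * s)) - 1) / -(γ * s) * s = (1 - Real.exp (-(γ * s))) / γ := by
        field_simp
        ring
      rw [exp_sq_eq hc hA, smul_smul, hsc]
  set B0 : ℝ := (σ 0 ^ 2 * ρ 0 * α 1 ^ 2 + σ 1 ^ 2 * ρ 1 * α 0 ^ 2) / γ ^ 2 with hB0
  set B1 : ℝ := (2 * σ 0 ^ 2 * ρ 0 * α 1 * ρ 1 * (α 0 - α 1)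
      - 2 * σ 1 ^ 2 * ρ 1 * α 0 * ρ 0 * (α 0 - α 1)) / γ ^ 2 with hB1
  set B2 : ℝ := ((σ 0 ^ 2 * ρ 0 * ρ 1 ^ 2 + σ 1 ^ 2 * ρ 1 * ρ 0 ^ 2) * (α 0 - α 1) ^ 2) / γ ^ 2
    with hB2
  have hint : ∀ s : ℝ,
      ρ ⬝ᵥ (((NormedSpace.exp (s • M)) * (Matrix.diagonal fun i => σ i ^ 2 / ρ i)
          * (NormedSpace.exp (s • M))ᵀ) *ᵥ ρ)
        = B0 + B1 * Real.exp ((-γ) * s) + B2 * Real.exp ((-(2 * γ)) * s) := by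
    intro s
    rw [hexp s, hB0, hB1, hB2,
      show ((-(2 * γ)) * s) = (-(γ * s)) + (-(γ * s)) by ring, Real.exp_add,
      show ((-γ) * s) = -(γ * s) by ring]
    subst hM
    generalize Real.exp (-(γ * s)) = e
    simp only [dotProduct, Matrix.mulVec, Matrix.mul_apply, Matrix.transpose_apply,
      Matrix.add_apply, Matrix.smul_apply, Matrix.one_apply, Matrix.diagonal_apply,
      Matrix.of_apply, Fin.sum_univ_two, smul_eq_mul, Fin.isValue]
    simp only [if_true, show (0 : Fin 2) ≠ 1 by decide, show (1 : Fin 2) ≠ 0 by decide, if_false]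
    have hρ1' : ρ 1 ≠ 0 := ne_of_gt (hρ 1)
    field_simp
    rw [hγdef, h1]
    ring
  rw [intervalIntegral.integral_congr (g := fun s =>
      B0 + B1 * Real.exp ((-γ) * s) + B2 * Real.exp ((-(2 * γ)) * s)) (fun s _ => hint s)]
  have hc1 : Continuous fun s : ℝ => B1 * Real.exp ((-γ) * s) := by fun_prop
  have hc2 : Continuous fun s : ℝ => B2 * Real.exp ((-(2 * γ)) * s) := by fun_prop
  have hI1 : IntervalIntegrable (fun s => B1 * Real.exp ((-γ) * s)) MeasureTheory.volume 0 T :=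
    hc1.intervalIntegrable 0 T
  have hI2 : IntervalIntegrable (fun s => B2 * Real.exp ((-(2 * γ)) * s))
      MeasureTheory.volume 0 T :=
    hc2.intervalIntegrable 0 T
  rw [intervalIntegral.integral_add (intervalIntegrable_const.add hI1) hI2,
    intervalIntegral.integral_add intervalIntegrable_const hI1,
    intervalIntegral.integral_const, intervalIntegral.integral_const_mul,
    intervalIntegral.integral_const_mul,
    exp_int_aux (-γ) T (neg_ne_zero.mpr hγ0),
    exp_int_aux (-(2 * γ)) T (neg_ne_zero.mpr (by positivity)),
    hB0, hB1, hB2,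
    show (-2 * γ * T) = (-(2 * γ)) * T by ring,
    show (-γ * T) = (-γ) * T by ring]
  rw [smul_eq_mul]
  field_simp
  ring

/-- Lemma L:MainK=2: explicit formula for
`V_T² = ∫₀ᵀ ϱᵀ e^{Ms} R⁻¹ (e^{Ms})ᵀ ϱ ds` in the two-group case. -/
theorem statement13 (ρ α σ : Fin 2 → ℝ)
    (hρ : ∀ k, 0 < ρ k) (hρsum : ρ 0 + ρ 1 = 1)
    (hα : ∀ k, 0 < α k) (hσ : ∀ k, 0 < σ k) (T : ℝ) (hT : 0 < T) :
    let M : Matrix (Fin 2) (Fin 2) ℝ :=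
      Matrix.of fun i j => -(α i) * ((if i = j then (1:ℝ) else 0) - ρ j)
    let Rinv : Matrix (Fin 2) (Fin 2) ℝ := Matrix.diagonal fun i => σ i ^ 2 / ρ i
    let γ : ℝ := α 1 * ρ 0 + α 0 * ρ 1
    (∫ s in (0:ℝ)..T,
        ρ ⬝ᵥ (((NormedSpace.exp (s • M)) * Rinv * (NormedSpace.exp (s • M))ᵀ) *ᵥ ρ)) =
      σ 0 ^ 2 * ρ 0 / γ ^ 2 *
          (α 1 ^ 2 * T + ρ 1 ^ 2 * (α 0 - α 1) ^ 2 / (2 * γ) * (1 - Real.exp (-2 * γ * T)) +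
            2 * α 1 * ρ 1 * (α 0 - α 1) / γ * (1 - Real.exp (-γ * T))) +
        σ 1 ^ 2 * ρ 1 / γ ^ 2 *
          (α 0 ^ 2 * T + ρ 0 ^ 2 * (α 0 - α 1) ^ 2 / (2 * γ) * (1 - Real.exp (-2 * γ * T)) +
            2 * α 0 * ρ 0 * (α 1 - α 0) / γ * (1 - Real.exp (-γ * T))) := by
  intro M Rinv γ
  exact key ρ α σ hρ hρsum hα hσ T hT M rfl
end
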